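/- For M an (A,B)-Yetter-Drinfeld Hom-module and N a (C,D)-Yetter-Drinfeld Hom-module, the braiding map c_{M,N}: M⊗N → ᴹN⊗M defined by c_{M,N}(m⊗n) = ν(n₍₀₎) ⊗ B⁻¹(n₍₁₎)·μ⁻¹(m) is H-linear, where H acts on M⊗N by h·(m⊗n) = C(h₁)·m ⊗ C⁻¹BC(h₂)·n and on ᴹN⊗M by h·(n⊗m) = C⁻¹BC(h₁)▷n ⊗ B⁻¹DC⁻¹BC(h₂)·m. -/

import Mathlib

open TensorProduct

/-- A monoidal Hom-Hopf algebra (with bijective antipode) over a field `k`. -/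
structure HomHopf (k : Type*) [Field k] (H : Type*) [AddCommGroup H] [Module k H] where
  mul : H →ₗ[k] H →ₗ[k] H
  one : H
  a : H ≃ₗ[k] H
  comul : H →ₗ[k] H ⊗[k] H
  counit : H →ₗ[k] k
  S : H ≃ₗ[k] H
  hom_assoc : ∀ x y z : H, mul (a x) (mul y z) = mul (mul x y) (a z)
  a_mul : ∀ x y : H, a (mul x y) = mul (a x) (a y)
  mul_one' : ∀ x : H, mul x one = a x
  one_mul' : ∀ x : H, mul one x = a x
  a_one : a one = one
  hom_coassoc : (TensorProduct.map a.symm.toLinearMap comul).comp comul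
      = (TensorProduct.assoc k H H H).toLinearMap.comp
          ((TensorProduct.map comul a.symm.toLinearMap).comp comul)
  comul_a : ∀ x : H, comul (a x) = TensorProduct.map a.toLinearMap a.toLinearMap (comul x)
  counit_comul : ∀ x : H,
    (TensorProduct.lid k H) ((TensorProduct.map counit LinearMap.id) (comul x)) = a.symm x
  comul_counit : ∀ x : H,
    (TensorProduct.rid k H) ((TensorProduct.map LinearMap.id counit) (comul x)) = a.symm x
  counit_a : ∀ x : H, counit (a x) = counit x
  comul_mul : ∀ x y : H, comul (mul x y)
      = (TensorProduct.map (TensorProduct.lift mul) (TensorProduct.lift mul))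
          ((TensorProduct.tensorTensorTensorComm k H H H H) (comul x ⊗ₜ[k] comul y))
  comul_one : comul one = one ⊗ₜ[k] one
  counit_mul : ∀ x y : H, counit (mul x y) = counit x * counit y
  counit_one : counit one = 1
  S_a : ∀ x : H, S (a x) = a (S x)
  antipode_left : ∀ x : H,
    (TensorProduct.lift mul) ((TensorProduct.map S.toLinearMap LinearMap.id) (comul x))
      = counit x • one
  antipode_right : ∀ x : H,
    (TensorProduct.lift mul) ((TensorProduct.map LinearMap.id S.toLinearMap) (comul x))
      = counit x • one

/-- A monoidal Hom-Hopf algebra automorphism. -/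
structure IsHomHopfAuto {k : Type*} [Field k] {H : Type*} [AddCommGroup H] [Module k H]
    (HH : HomHopf k H) (f : H ≃ₗ[k] H) : Prop where
  map_mul : ∀ x y : H, f (HH.mul x y) = HH.mul (f x) (f y)
  map_one : f HH.one = HH.one
  map_comul : ∀ x : H, HH.comul (f x)
      = TensorProduct.map f.toLinearMap f.toLinearMap (HH.comul x)
  map_counit : ∀ x : H, HH.counit (f x) = HH.counit x
  map_a : ∀ x : H, f (HH.a x) = HH.a (f x)

/-- A left-right (A,B)-Yetter-Drinfeld Hom-module over `HH`. -/
structure YDModule {k : Type*} [Field k] {H : Type*} [AddCommGroup H] [Module k H]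
    (HH : HomHopf k H) (A B : H ≃ₗ[k] H)
    (M : Type*) [AddCommGroup M] [Module k M] where
  act : H →ₗ[k] M →ₗ[k] M
  coact : M →ₗ[k] M ⊗[k] H
  mu : M ≃ₗ[k] M
  hom_act : ∀ (h g : H) (m : M), act (HH.a h) (act g m) = act (HH.mul h g) (mu m)
  mu_act : ∀ (h : H) (m : M), mu (act h m) = act (HH.a h) (mu m)
  one_act : ∀ m : M, act HH.one m = mu m
  hom_coact : (TensorProduct.map mu.symm.toLinearMap HH.comul).comp coact
      = (TensorProduct.assoc k M H H).toLinearMap.comp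
          ((TensorProduct.map coact HH.a.symm.toLinearMap).comp coact)
  coact_mu : ∀ m : M, coact (mu m)
      = TensorProduct.map mu.toLinearMap HH.a.toLinearMap (coact m)
  coact_counit : ∀ m : M,
    (TensorProduct.rid k M) ((TensorProduct.map LinearMap.id HH.counit) (coact m)) = mu.symm m
  compat : ∀ (h : H) (m : M) (n : ℕ) (h1 h2 : Fin n → H),
      HH.comul h = ∑ i, h1 i ⊗ₜ[k] h2 i →
      ∀ (p : ℕ) (h21 h22 : Fin n → Fin p → H),
      (∀ i, HH.comul (h2 i) = ∑ j, h21 i j ⊗ₜ[k] h22 i j) →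
      ∀ (q : ℕ) (m0 : Fin q → M) (m1 : Fin q → H),
      coact m = ∑ l, m0 l ⊗ₜ[k] m1 l →
      coact (act h m) = ∑ i, ∑ j, ∑ l,
        act (HH.a (h21 i j)) (m0 l) ⊗ₜ[k]
          HH.mul (HH.mul (B (h22 i j)) (HH.a.symm (m1 l))) (A (HH.S.symm (h1 i)))


section Reps
variable {k : Type*} [Field k] {P Q : Type*} [AddCommGroup P] [Module k P]
  [AddCommGroup Q] [Module k Q]

theorem exists_rep (t : P ⊗[k] Q) :
    ∃ (q : ℕ) (u : Fin q → P) (v : Fin q → Q), t = ∑ j, u j ⊗ₜ[k] v j := by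
  induction t with
  | zero => exact ⟨0, ![], ![], by simp⟩
  | tmul p q => exact ⟨1, fun _ => p, fun _ => q, by simp⟩
  | add s t hs ht =>
    obtain ⟨q1, u1, v1, h1⟩ := hs; obtain ⟨q2, u2, v2, h2⟩ := ht
    refine ⟨q1 + q2, Fin.append u1 u2, Fin.append v1 v2, ?_⟩
    rw [Fin.sum_univ_add]
    simp [h1, h2]

theorem exists_rep_fam {ι : Type*} [Fintype ι] (w : ι → P ⊗[k] Q) :
    ∃ (p : ℕ) (u : ι → Fin p → P) (v : ι → Fin p → Q),
      ∀ i, w i = ∑ j, u i j ⊗ₜ[k] v i j := by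
  choose q u v hw using fun i => exists_rep (w i)
  classical
  refine ⟨Finset.univ.sup q, fun i j => if h : (j : ℕ) < q i then u i ⟨j, h⟩ else 0,
    fun i j => if h : (j : ℕ) < q i then v i ⟨j, h⟩ else 0, fun i => ?_⟩
  have hle : q i ≤ Finset.univ.sup q := Finset.le_sup (Finset.mem_univ i)
  rw [hw i]
  have key : ∀ (m : ℕ), q i ≤ m →
      ∑ (j : Fin m), ((if h : (j : ℕ) < q i then u i ⟨j, h⟩ else 0) ⊗ₜ[k]
        (if h : (j : ℕ) < q i then v i ⟨j, h⟩ else 0)) = ∑ j, u i j ⊗ₜ[k] v i j := by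
    intro m hm
    rw [Fin.sum_univ_eq_sum_range (fun j => (if h : j < q i then u i ⟨j, h⟩ else 0) ⊗ₜ[k]
        (if h : j < q i then v i ⟨j, h⟩ else 0)) m]
    rw [← Finset.sum_subset (Finset.range_subset_range.2 hm) (by
      intro j hj hnj
      simp only [Finset.mem_range] at hnj
      rw [dif_neg hnj, TensorProduct.zero_tmul])]
    rw [← Fin.sum_univ_eq_sum_range (fun j => (if h : j < q i then u i ⟨j, h⟩ else 0) ⊗ₜ[k]
        (if h : j < q i then v i ⟨j, h⟩ else 0)) (q i)]
    refine Finset.sum_congr rfl fun j _ => ?_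
    simp [j.2]
  exact (key _ hle).symm
end Reps

section Sums
variable {V : Type*} [AddCommMonoid V]

theorem rotate₃ {ι κ σ : Type*} [Fintype ι] [Fintype κ] [Fintype σ] (F : ι → κ → σ → V) :
    ∑ i, ∑ j, ∑ l, F i j l = ∑ j, ∑ l, ∑ i, F i j l := by
  rw [Finset.sum_comm]
  exact Finset.sum_congr rfl fun b _ => Finset.sum_comm

theorem swap₂₂ {ι κ σ τ : Type*} [Fintype ι] [Fintype κ] [Fintype σ] [Fintype τ]
    (F : ι → κ → σ → τ → V) :
    ∑ i, ∑ u, ∑ j, ∑ v, F i u j v = ∑ j, ∑ v, ∑ i, ∑ u, F i u j v := by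
  have h1 : ∀ i, ∑ u, ∑ j, ∑ v, F i u j v = ∑ j, ∑ v, ∑ u, F i u j v :=
    fun i => rotate₃ (fun u j v => F i u j v)
  rw [Finset.sum_congr rfl (fun i _ => h1 i)]
  exact rotate₃ (fun i j v => ∑ u, F i u j v)
end Sums

section Congr
variable {k : Type*} [Field k] {P Q R T V : Type*} [AddCommGroup P] [Module k P]
  [AddCommGroup Q] [Module k Q] [AddCommGroup R] [Module k R]
  [AddCommGroup T] [Module k T] [AddCommGroup V] [Module k V]

theorem map_symm_cancel (e : P ≃ₗ[k] Q) (g : R ≃ₗ[k] T) (t : P ⊗[k] R) :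
    TensorProduct.map e.symm.toLinearMap g.symm.toLinearMap
      (TensorProduct.map e.toLinearMap g.toLinearMap t) = t := by
  induction t with
  | zero => simp
  | tmul a b => simp
  | add u v hu hv => simp [hu, hv]

noncomputable def lift₃ (f : P →ₗ[k] Q →ₗ[k] R →ₗ[k] V) : P ⊗[k] (Q ⊗[k] R) →ₗ[k] V :=
  TensorProduct.lift ((TensorProduct.uncurry (RingHom.id k) Q R V).comp f)

@[simp] theorem lift₃_tmul (f : P →ₗ[k] Q →ₗ[k] R →ₗ[k] V) (p : P) (q : Q) (r : R) :
    lift₃ f (p ⊗ₜ[k] (q ⊗ₜ[k] r)) = f p q r := by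
  simp [lift₃]

noncomputable def lift₄ (f : P →ₗ[k] Q →ₗ[k] R →ₗ[k] T →ₗ[k] V) :
    P ⊗[k] (Q ⊗[k] (R ⊗[k] T)) →ₗ[k] V :=
  TensorProduct.lift ((TensorProduct.uncurry (RingHom.id k) Q (R ⊗[k] T) V).comp
    ((LinearMap.llcomp k Q (R →ₗ[k] T →ₗ[k] V) (R ⊗[k] T →ₗ[k] V)
      (TensorProduct.uncurry (RingHom.id k) R T V)).comp f))

@[simp] theorem lift₄_tmul (f : P →ₗ[k] Q →ₗ[k] R →ₗ[k] T →ₗ[k] V) (p : P) (q : Q) (r : R) (t : T) :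
    lift₄ f (p ⊗ₜ[k] (q ⊗ₜ[k] (r ⊗ₜ[k] t))) = f p q r t := by
  simp [lift₄]

theorem bi_congr {ι₁ ι₂ : Type*} [Fintype ι₁] [Fintype ι₂]
    (f : P →ₗ[k] Q →ₗ[k] V) (a : ι₁ → P) (b : ι₁ → Q) (a' : ι₂ → P) (b' : ι₂ → Q)
    (h : ∑ i, a i ⊗ₜ[k] b i = ∑ i, a' i ⊗ₜ[k] b' i) :
    ∑ i, f (a i) (b i) = ∑ i, f (a' i) (b' i) := by
  have := congrArg (TensorProduct.lift f) h
  simpa [map_sum] using this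

theorem bi_congr₂₁ {ι₁ κ₁ ι₂ : Type*} [Fintype ι₁] [Fintype κ₁] [Fintype ι₂]
    (f : P →ₗ[k] Q →ₗ[k] V) (a : ι₁ → κ₁ → P) (b : ι₁ → κ₁ → Q) (a' : ι₂ → P) (b' : ι₂ → Q)
    (h : ∑ i, ∑ j, a i j ⊗ₜ[k] b i j = ∑ i, a' i ⊗ₜ[k] b' i) :
    ∑ i, ∑ j, f (a i j) (b i j) = ∑ i, f (a' i) (b' i) := by
  have := congrArg (TensorProduct.lift f) h
  simpa [map_sum] using this

theorem tri_congr₂₂ {ι₁ κ₁ ι₂ κ₂ : Type*} [Fintype ι₁] [Fintype κ₁] [Fintype ι₂] [Fintype κ₂]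
    (f : P →ₗ[k] Q →ₗ[k] R →ₗ[k] V)
    (a : ι₁ → κ₁ → P) (b : ι₁ → κ₁ → Q) (c : ι₁ → κ₁ → R)
    (a' : ι₂ → κ₂ → P) (b' : ι₂ → κ₂ → Q) (c' : ι₂ → κ₂ → R)
    (h : ∑ i, ∑ j, a i j ⊗ₜ[k] (b i j ⊗ₜ[k] c i j)
       = ∑ i, ∑ j, a' i j ⊗ₜ[k] (b' i j ⊗ₜ[k] c' i j)) :
    ∑ i, ∑ j, f (a i j) (b i j) (c i j) = ∑ i, ∑ j, f (a' i j) (b' i j) (c' i j) := by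
  have := congrArg (lift₃ f) h
  simpa [map_sum] using this

theorem quad_congr₃₃ {ι κ₁ lam₁ κ₂ lam₂ : Type*} [Fintype ι] [Fintype κ₁] [Fintype lam₁]
    [Fintype κ₂] [Fintype lam₂]
    (f : P →ₗ[k] Q →ₗ[k] R →ₗ[k] T →ₗ[k] V)
    (a : ι → κ₁ → lam₁ → P) (b : ι → κ₁ → lam₁ → Q) (c : ι → κ₁ → lam₁ → R) (d : ι → κ₁ → lam₁ → T)
    (a' : ι → κ₂ → lam₂ → P) (b' : ι → κ₂ → lam₂ → Q) (c' : ι → κ₂ → lam₂ → R) (d' : ι → κ₂ → lam₂ → T)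
    (h : ∑ i, ∑ j, ∑ l, a i j l ⊗ₜ[k] (b i j l ⊗ₜ[k] (c i j l ⊗ₜ[k] d i j l))
       = ∑ i, ∑ j, ∑ l, a' i j l ⊗ₜ[k] (b' i j l ⊗ₜ[k] (c' i j l ⊗ₜ[k] d' i j l))) :
    ∑ i, ∑ j, ∑ l, f (a i j l) (b i j l) (c i j l) (d i j l)
      = ∑ i, ∑ j, ∑ l, f (a' i j l) (b' i j l) (c' i j l) (d' i j l) := by
  have := congrArg (lift₄ f) h
  simpa [map_sum] using this

noncomputable def mk₃ (f : P → Q → R → V)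
    (h1a : ∀ (x x' : P) y z, f (x + x') y z = f x y z + f x' y z)
    (h1s : ∀ (c : k) x y z, f (c • x) y z = c • f x y z)
    (h2a : ∀ x (y y' : Q) z, f x (y + y') z = f x y z + f x y' z)
    (h2s : ∀ (c : k) x y z, f x (c • y) z = c • f x y z)
    (h3a : ∀ x y (z z' : R), f x y (z + z') = f x y z + f x y z')
    (h3s : ∀ (c : k) x y z, f x y (c • z) = c • f x y z) :
    P →ₗ[k] Q →ₗ[k] R →ₗ[k] V where
  toFun x := LinearMap.mk₂ k (f x) (h2a x) (fun c y z => h2s c x y z) (h3a x)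
    (fun c y z => h3s c x y z)
  map_add' x x' := LinearMap.ext₂ fun y z => h1a x x' y z
  map_smul' c x := LinearMap.ext₂ fun y z => h1s c x y z

@[simp] theorem mk₃_apply (f : P → Q → R → V) {h1a h1s h2a h2s h3a h3s} (x : P) (y : Q) (z : R) :
    mk₃ (k := k) f h1a h1s h2a h2s h3a h3s x y z = f x y z := rfl

noncomputable def mk₄ (f : P → Q → R → T → V)
    (h1a : ∀ (x x' : P) y z w, f (x + x') y z w = f x y z w + f x' y z w)
    (h1s : ∀ (c : k) x y z w, f (c • x) y z w = c • f x y z w)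
    (h2a : ∀ x (y y' : Q) z w, f x (y + y') z w = f x y z w + f x y' z w)
    (h2s : ∀ (c : k) x y z w, f x (c • y) z w = c • f x y z w)
    (h3a : ∀ x y (z z' : R) w, f x y (z + z') w = f x y z w + f x y z' w)
    (h3s : ∀ (c : k) x y z w, f x y (c • z) w = c • f x y z w)
    (h4a : ∀ x y z (w w' : T), f x y z (w + w') = f x y z w + f x y z w')
    (h4s : ∀ (c : k) x y z w, f x y z (c • w) = c • f x y z w) :
    P →ₗ[k] Q →ₗ[k] R →ₗ[k] T →ₗ[k] V where
  toFun x := mk₃ (f x) (h2a x) (fun c y z w => h2s c x y z w) (h3a x)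
    (fun c y z w => h3s c x y z w) (h4a x) (fun c y z w => h4s c x y z w)
  map_add' x x' := by
    refine LinearMap.ext₂ fun y z => LinearMap.ext fun w => ?_
    simpa using h1a x x' y z w
  map_smul' c x := by
    refine LinearMap.ext₂ fun y z => LinearMap.ext fun w => ?_
    simpa using h1s c x y z w

@[simp] theorem mk₄_apply (f : P → Q → R → T → V) {h1a h1s h2a h2s h3a h3s h4a h4s}
    (x : P) (y : Q) (z : R) (w : T) :
    mk₄ (k := k) f h1a h1s h2a h2s h3a h3s h4a h4s x y z w = f x y z w := rfl
end Congr

section HopfLemmas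
variable {k : Type*} [Field k] {H : Type*} [AddCommGroup H] [Module k H]
variable (HH : HomHopf k H)

theorem a_symm_mul (x y : H) :
    HH.a.symm (HH.mul x y) = HH.mul (HH.a.symm x) (HH.a.symm y) := by
  rw [LinearEquiv.symm_apply_eq, HH.a_mul]
  simp

theorem a_symm_one : HH.a.symm HH.one = HH.one := by
  rw [LinearEquiv.symm_apply_eq, HH.a_one]

theorem S_a_symm (x : H) : HH.S (HH.a.symm x) = HH.a.symm (HH.S x) := by
  rw [eq_comm, LinearEquiv.symm_apply_eq, ← HH.S_a]
  simp

theorem S_symm_a (x : H) : HH.S.symm (HH.a x) = HH.a (HH.S.symm x) := by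
  apply HH.S.injective
  rw [LinearEquiv.apply_symm_apply, HH.S_a, LinearEquiv.apply_symm_apply]

theorem S_one : HH.S HH.one = HH.one := by
  have h := HH.antipode_left HH.one
  rw [HH.comul_one, TensorProduct.map_tmul, TensorProduct.lift.tmul, HH.counit_one,
    one_smul] at h
  simp only [LinearMap.id_coe, id_eq, LinearEquiv.coe_coe] at h
  rw [HH.mul_one'] at h
  apply HH.a.injective
  rw [h, HH.a_one]

theorem S_symm_one : HH.S.symm HH.one = HH.one := by
  rw [LinearEquiv.symm_apply_eq, S_one]

variable {ι : Type*} [Fintype ι]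

theorem counit_sum_right (x : H) (x1 x2 : ι → H)
    (hx : HH.comul x = ∑ i, x1 i ⊗ₜ[k] x2 i) :
    ∑ i, HH.counit (x2 i) • x1 i = HH.a.symm x := by
  have h := HH.comul_counit x
  rw [hx] at h
  simpa [map_sum] using h

theorem counit_sum_left (x : H) (x1 x2 : ι → H)
    (hx : HH.comul x = ∑ i, x1 i ⊗ₜ[k] x2 i) :
    ∑ i, HH.counit (x1 i) • x2 i = HH.a.symm x := by
  have h := HH.counit_comul x
  rw [hx] at h
  simpa [map_sum] using h

theorem antipode_sum_left (x : H) (x1 x2 : ι → H)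
    (hx : HH.comul x = ∑ i, x1 i ⊗ₜ[k] x2 i) :
    ∑ i, HH.mul (HH.S (x1 i)) (x2 i) = HH.counit x • HH.one := by
  have h := HH.antipode_left x
  rw [hx] at h
  simpa [map_sum] using h

theorem antipode_sum_right (x : H) (x1 x2 : ι → H)
    (hx : HH.comul x = ∑ i, x1 i ⊗ₜ[k] x2 i) :
    ∑ i, HH.mul (x1 i) (HH.S (x2 i)) = HH.counit x • HH.one := by
  have h := HH.antipode_right x
  rw [hx] at h
  simpa [map_sum] using h

theorem comul_a_symm_sum (x : H) (x1 x2 : ι → H)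
    (hx : HH.comul x = ∑ i, x1 i ⊗ₜ[k] x2 i) :
    HH.comul (HH.a.symm x) = ∑ i, HH.a.symm (x1 i) ⊗ₜ[k] HH.a.symm (x2 i) := by
  have h := HH.comul_a (HH.a.symm x)
  rw [LinearEquiv.apply_symm_apply, hx] at h
  have h2 := congrArg (TensorProduct.map HH.a.symm.toLinearMap HH.a.symm.toLinearMap) h
  rw [map_symm_cancel] at h2
  rw [← h2]
  simp [map_sum]

theorem comul_mul_sum {κ : Type*} [Fintype κ] (x y : H) (x1 x2 : ι → H) (y1 y2 : κ → H)
    (hx : HH.comul x = ∑ i, x1 i ⊗ₜ[k] x2 i) (hy : HH.comul y = ∑ j, y1 j ⊗ₜ[k] y2 j) :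
    HH.comul (HH.mul x y)
      = ∑ i, ∑ j, HH.mul (x1 i) (y1 j) ⊗ₜ[k] HH.mul (x2 i) (y2 j) := by
  rw [HH.comul_mul x y, hx, hy]
  rw [TensorProduct.sum_tmul]
  simp [TensorProduct.tmul_sum, map_sum]

theorem coassoc_sum {κ lam : Type*} [Fintype κ] [Fintype lam] (x : H)
    (x1 x2 : ι → H) (x11 x12 : ι → κ → H) (x21 x22 : ι → lam → H)
    (hx : HH.comul x = ∑ i, x1 i ⊗ₜ[k] x2 i)
    (hx1 : ∀ i, HH.comul (x1 i) = ∑ j, x11 i j ⊗ₜ[k] x12 i j)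
    (hx2 : ∀ i, HH.comul (x2 i) = ∑ j, x21 i j ⊗ₜ[k] x22 i j) :
    ∑ i, ∑ j, x1 i ⊗ₜ[k] (x21 i j ⊗ₜ[k] x22 i j)
      = ∑ i, ∑ j, HH.a (x11 i j) ⊗ₜ[k] (x12 i j ⊗ₜ[k] HH.a.symm (x2 i)) := by
  have h := LinearMap.congr_fun HH.hom_coassoc x
  simp only [LinearMap.comp_apply, LinearEquiv.coe_coe] at h
  rw [hx] at h
  simp only [map_sum, TensorProduct.map_tmul, hx1, hx2, TensorProduct.sum_tmul,
    TensorProduct.tmul_sum, TensorProduct.assoc_tmul, LinearEquiv.coe_coe,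
    LinearMap.id_coe, id_eq] at h
  have h2 := congrArg (TensorProduct.map HH.a.toLinearMap
    (LinearMap.id : H ⊗[k] H →ₗ[k] H ⊗[k] H)) h
  simpa [map_sum] using h2

end HopfLemmas

section AutoLemmas
variable {k : Type*} [Field k] {H : Type*} [AddCommGroup H] [Module k H]
variable (HH : HomHopf k H)

theorem auto_a_symm {f : H ≃ₗ[k] H} (hf : IsHomHopfAuto HH f) (x : H) :
    f (HH.a.symm x) = HH.a.symm (f x) := by
  rw [eq_comm, LinearEquiv.symm_apply_eq, ← hf.map_a]
  simp

theorem auto_symm {f : H ≃ₗ[k] H} (hf : IsHomHopfAuto HH f) : IsHomHopfAuto HH f.symm := by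
  constructor
  · intro x y
    apply f.injective
    rw [hf.map_mul]
    simp
  · apply f.injective
    simp [hf.map_one]
  · intro x
    have h := hf.map_comul (f.symm x)
    rw [LinearEquiv.apply_symm_apply] at h
    have h2 := congrArg (TensorProduct.map f.symm.toLinearMap f.symm.toLinearMap) h
    rw [map_symm_cancel] at h2
    exact h2.symm
  · intro x
    rw [← hf.map_counit (f.symm x), LinearEquiv.apply_symm_apply]
  · intro x
    apply f.injective
    rw [LinearEquiv.apply_symm_apply, hf.map_a, LinearEquiv.apply_symm_apply]

theorem auto_trans {f g : H ≃ₗ[k] H} (hf : IsHomHopfAuto HH f) (hg : IsHomHopfAuto HH g) :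
    IsHomHopfAuto HH (f ≪≫ₗ g) := by
  constructor
  · intro x y
    simp [LinearEquiv.trans_apply, hf.map_mul, hg.map_mul]
  · simp [LinearEquiv.trans_apply, hf.map_one, hg.map_one]
  · intro x
    have h1 : HH.comul ((f ≪≫ₗ g) x) = TensorProduct.map g.toLinearMap g.toLinearMap
        (TensorProduct.map f.toLinearMap f.toLinearMap (HH.comul x)) := by
      rw [LinearEquiv.trans_apply, hg.map_comul, hf.map_comul]
    rw [h1, ← LinearMap.comp_apply, ← TensorProduct.map_comp]
    rfl
  · intro x
    simp [LinearEquiv.trans_apply, hf.map_counit, hg.map_counit]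
  · intro x
    simp [LinearEquiv.trans_apply, hf.map_a, hg.map_a]

theorem auto_comul_sum {f : H ≃ₗ[k] H} (hf : IsHomHopfAuto HH f) {ι : Type*} [Fintype ι]
    (x : H) (x1 x2 : ι → H) (hx : HH.comul x = ∑ i, x1 i ⊗ₜ[k] x2 i) :
    HH.comul (f x) = ∑ i, f (x1 i) ⊗ₜ[k] f (x2 i) := by
  rw [hf.map_comul, hx]
  simp [map_sum]

theorem antipode_unique (S' : H →ₗ[k] H)
    (hS'a : ∀ x, S' (HH.a x) = HH.a (S' x))
    (hS'left : ∀ (x : H) (q : ℕ) (x1 x2 : Fin q → H),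
      HH.comul x = ∑ i, x1 i ⊗ₜ[k] x2 i →
      ∑ i, HH.mul (S' (x1 i)) (x2 i) = HH.counit x • HH.one) :
    ∀ x, S' x = HH.S x := by
  intro x
  obtain ⟨n, x1, x2, hx⟩ := exists_rep (HH.comul x)
  obtain ⟨p, x11, x12, hx1⟩ := exists_rep_fam (fun i => HH.comul (x1 i))
  obtain ⟨r, x21, x22, hx2⟩ := exists_rep_fam (fun i => HH.comul (x2 i))
  have hS'as : ∀ y, S' (HH.a.symm y) = HH.a.symm (S' y) := by
    intro y
    rw [eq_comm, LinearEquiv.symm_apply_eq, ← hS'a]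
    simp
  have e1 : S' x = ∑ i, HH.mul (S' (x1 i)) (HH.counit (x2 i) • HH.one) := by
    have hcr := counit_sum_right HH x x1 x2 hx
    calc S' x = HH.a (S' (HH.a.symm x)) := by rw [hS'as]; simp
      _ = HH.a (S' (∑ i, HH.counit (x2 i) • x1 i)) := by rw [hcr]
      _ = ∑ i, HH.counit (x2 i) • HH.a (S' (x1 i)) := by
          rw [map_sum, map_sum]
          simp
      _ = ∑ i, HH.counit (x2 i) • HH.mul (S' (x1 i)) HH.one := by
          simp [HH.mul_one']
      _ = ∑ i, HH.mul (S' (x1 i)) (HH.counit (x2 i) • HH.one) := by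
          simp
  have e2 : S' x = ∑ i, ∑ j, HH.mul (S' (x1 i)) (HH.mul (x21 i j) (HH.S (x22 i j))) := by
    rw [e1]
    refine Finset.sum_congr rfl fun i _ => ?_
    rw [← antipode_sum_right HH (x2 i) _ _ (hx2 i), map_sum]
  have e3 : S' x = ∑ i, ∑ j, HH.mul (S' (HH.a (x11 i j)))
      (HH.mul (x12 i j) (HH.S (HH.a.symm (x2 i)))) := by
    rw [e2]
    exact tri_congr₂₂ (mk₃ (fun a b c => HH.mul (S' a) (HH.mul b (HH.S c)))
      (by intros; simp [map_add, LinearMap.add_apply])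
      (by intros; simp [map_smul, LinearMap.smul_apply])
      (by intros; simp [map_add, LinearMap.add_apply])
      (by intros; simp [map_smul, LinearMap.smul_apply])
      (by intros; simp [map_add, LinearMap.add_apply])
      (by intros; simp [map_smul, LinearMap.smul_apply]))
      (fun i _ => x1 i) x21 x22 (fun i j => HH.a (x11 i j)) x12 (fun i _ => HH.a.symm (x2 i))
      (coassoc_sum HH x x1 x2 x11 x12 x21 x22 hx hx1 hx2)
  have e4 : S' x = ∑ i, HH.mul (HH.counit (x1 i) • HH.one) (HH.S (x2 i)) := by
    rw [e3]
    refine Finset.sum_congr rfl fun i _ => ?_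
    have point : ∀ j, HH.mul (S' (HH.a (x11 i j))) (HH.mul (x12 i j) (HH.S (HH.a.symm (x2 i))))
        = HH.mul (HH.mul (S' (x11 i j)) (x12 i j)) (HH.S (x2 i)) := by
      intro j
      rw [hS'a, S_a_symm, HH.hom_assoc, LinearEquiv.apply_symm_apply]
    rw [Finset.sum_congr rfl (fun j _ => point j)]
    rw [← hS'left (x1 i) p (x11 i) (x12 i) (hx1 i)]
    simp [map_sum, LinearMap.sum_apply]
  have e5 : S' x = HH.a (HH.S (HH.a.symm x)) := by
    rw [e4, ← counit_sum_left HH x x1 x2 hx]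
    rw [map_sum, map_sum]
    refine Finset.sum_congr rfl fun i _ => ?_
    simp [map_smul, LinearMap.smul_apply, HH.one_mul']
  rw [e5, S_a_symm]
  simp

theorem auto_S {f : H ≃ₗ[k] H} (hf : IsHomHopfAuto HH f) (x : H) :
    HH.S (f x) = f (HH.S x) := by
  have key := antipode_unique HH (f.symm.toLinearMap ∘ₗ HH.S.toLinearMap ∘ₗ f.toLinearMap)
    (by
      intro y
      simp only [LinearMap.comp_apply, LinearEquiv.coe_coe]
      rw [hf.map_a, HH.S_a, (auto_symm HH hf).map_a])
    (by
      intro y q y1 y2 hy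
      have hterm : ∀ i, HH.mul ((f.symm.toLinearMap ∘ₗ HH.S.toLinearMap ∘ₗ f.toLinearMap) (y1 i)) (y2 i)
          = f.symm (HH.mul (HH.S (f (y1 i))) (f (y2 i))) := by
        intro i
        rw [(auto_symm HH hf).map_mul]
        simp
      rw [Finset.sum_congr rfl (fun i _ => hterm i), ← map_sum,
        antipode_sum_left HH (f y) _ _ (auto_comul_sum HH hf y y1 y2 hy),
        hf.map_counit, map_smul, (auto_symm HH hf).map_one])
  have hkx := key x
  rw [LinearMap.comp_apply, LinearMap.comp_apply] at hkx
  simp only [LinearEquiv.coe_coe] at hkx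
  rw [← hkx, LinearEquiv.apply_symm_apply]

theorem auto_S_symm {f : H ≃ₗ[k] H} (hf : IsHomHopfAuto HH f) (x : H) :
    HH.S.symm (f x) = f (HH.S.symm x) := by
  apply HH.S.injective
  rw [LinearEquiv.apply_symm_apply, auto_S HH hf, LinearEquiv.apply_symm_apply]

end AutoLemmas

section Antimul
variable {k : Type*} [Field k] {H : Type*} [AddCommGroup H] [Module k H]
variable (HH : HomHopf k H)

theorem PG {ι κ : Type*} [Fintype ι] [Fintype κ] (a b : H)
    (a1 a2 : ι → H) (b1 b2 : κ → H)
    (ha : HH.comul a = ∑ i, a1 i ⊗ₜ[k] a2 i) (hb : HH.comul b = ∑ j, b1 j ⊗ₜ[k] b2 j) :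
    ∑ i, ∑ j, HH.mul (HH.mul (a1 i) (b1 j)) (HH.mul (HH.S (b2 j)) (HH.S (a2 i)))
      = (HH.counit a * HH.counit b) • HH.one := by
  have step : ∀ p q r s : H, HH.mul (HH.mul p q) (HH.mul r s)
      = HH.mul (HH.a p) (HH.mul (HH.a.symm (HH.mul q r)) s) := by
    intro p q r s
    have k1 := (HH.hom_assoc p q (HH.a.symm (HH.mul r s))).symm
    rw [LinearEquiv.apply_symm_apply] at k1
    have k2 := HH.hom_assoc (HH.a.symm q) (HH.a.symm r) (HH.a.symm s)
    rw [LinearEquiv.apply_symm_apply, LinearEquiv.apply_symm_apply] at k2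
    rw [k1, a_symm_mul HH r s, k2, a_symm_mul HH q r]
  calc ∑ i, ∑ j, HH.mul (HH.mul (a1 i) (b1 j)) (HH.mul (HH.S (b2 j)) (HH.S (a2 i)))
      = ∑ i, ∑ j, HH.mul (HH.a (a1 i))
          (HH.mul (HH.a.symm (HH.mul (b1 j) (HH.S (b2 j)))) (HH.S (a2 i))) :=
        Finset.sum_congr rfl fun i _ => Finset.sum_congr rfl fun j _ => step _ _ _ _
    _ = ∑ i, HH.mul (HH.a (a1 i))
          (HH.mul (HH.a.symm (∑ j, HH.mul (b1 j) (HH.S (b2 j)))) (HH.S (a2 i))) := by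
        refine Finset.sum_congr rfl fun i _ => ?_
        simp only [map_sum, LinearMap.sum_apply]
    _ = ∑ i, HH.mul (HH.a (a1 i))
          (HH.mul (HH.a.symm (HH.counit b • HH.one)) (HH.S (a2 i))) := by
        rw [antipode_sum_right HH b b1 b2 hb]
    _ = ∑ i, HH.counit b • HH.a (HH.mul (a1 i) (HH.S (a2 i))) := by
        refine Finset.sum_congr rfl fun i _ => ?_
        rw [map_smul, a_symm_one HH, map_smul, LinearMap.smul_apply, HH.one_mul',
          map_smul, ← HH.a_mul]
    _ = HH.counit b • HH.a (∑ i, HH.mul (a1 i) (HH.S (a2 i))) := by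
        rw [map_sum, Finset.smul_sum]
    _ = (HH.counit a * HH.counit b) • HH.one := by
        rw [antipode_sum_right HH a a1 a2 ha, map_smul, HH.a_one, smul_smul, mul_comm]

theorem FP {ι κ : Type*} [Fintype ι] [Fintype κ] (a b : H)
    (a1 a2 : ι → H) (b1 b2 : κ → H)
    (ha : HH.comul a = ∑ i, a1 i ⊗ₜ[k] a2 i) (hb : HH.comul b = ∑ j, b1 j ⊗ₜ[k] b2 j) :
    ∑ i, ∑ j, HH.mul (HH.S (HH.mul (a1 i) (b1 j))) (HH.mul (a2 i) (b2 j))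
      = (HH.counit a * HH.counit b) • HH.one := by
  have hab : HH.comul (HH.mul a b) = ∑ p : ι × κ,
      HH.mul (a1 p.1) (b1 p.2) ⊗ₜ[k] HH.mul (a2 p.1) (b2 p.2) := by
    rw [comul_mul_sum HH a b a1 a2 b1 b2 ha hb]
    exact (Fintype.sum_prod_type
      (fun p : ι × κ => HH.mul (a1 p.1) (b1 p.2) ⊗ₜ[k] HH.mul (a2 p.1) (b2 p.2))).symm
  have h := antipode_sum_left HH (HH.mul a b) _ _ hab
  rw [HH.counit_mul] at h
  calc ∑ i, ∑ j, HH.mul (HH.S (HH.mul (a1 i) (b1 j))) (HH.mul (a2 i) (b2 j))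
      = ∑ p : ι × κ, HH.mul (HH.S (HH.mul (a1 p.1) (b1 p.2))) (HH.mul (a2 p.1) (b2 p.2)) :=
        (Fintype.sum_prod_type
          (fun p : ι × κ => HH.mul (HH.S (HH.mul (a1 p.1) (b1 p.2)))
            (HH.mul (a2 p.1) (b2 p.2)))).symm
    _ = _ := h

theorem S_antimul (x y : H) : HH.S (HH.mul x y) = HH.mul (HH.S y) (HH.S x) := by
  obtain ⟨na, a1, a2, ha⟩ := exists_rep (HH.comul x)
  obtain ⟨pa, a11, a12, ha1⟩ := exists_rep_fam (fun i => HH.comul (a1 i))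
  obtain ⟨ra, a21, a22, ha2⟩ := exists_rep_fam (fun i => HH.comul (a2 i))
  obtain ⟨nb, b1, b2, hb⟩ := exists_rep (HH.comul y)
  obtain ⟨pb, b11, b12, hb1⟩ := exists_rep_fam (fun j => HH.comul (b1 j))
  obtain ⟨rb, b21, b22, hb2⟩ := exists_rep_fam (fun j => HH.comul (b2 j))
  have e1 : HH.S (HH.mul x y) = ∑ i, ∑ j, HH.mul (HH.S (HH.mul (a1 i) (b1 j)))
      ((HH.counit (a2 i) * HH.counit (b2 j)) • HH.one) := by
    calc HH.S (HH.mul x y) = HH.a (HH.S (HH.mul (HH.a.symm x) (HH.a.symm y))) := by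
          rw [← a_symm_mul HH, S_a_symm HH]; simp
      _ = HH.a (HH.S (HH.mul (∑ i, HH.counit (a2 i) • a1 i)
            (∑ j, HH.counit (b2 j) • b1 j))) := by
          rw [counit_sum_right HH x a1 a2 ha, counit_sum_right HH y b1 b2 hb]
      _ = HH.a (HH.S (∑ i, ∑ j, (HH.counit (a2 i) * HH.counit (b2 j)) •
            HH.mul (a1 i) (b1 j))) := by
          congr 1
          congr 1
          rw [map_sum HH.mul, LinearMap.sum_apply]
          refine Finset.sum_congr rfl fun i _ => ?_
          rw [map_smul HH.mul, LinearMap.smul_apply, map_sum (HH.mul (a1 i)),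
            Finset.smul_sum]
          refine Finset.sum_congr rfl fun j _ => ?_
          rw [map_smul, smul_smul]
      _ = ∑ i, ∑ j, (HH.counit (a2 i) * HH.counit (b2 j)) •
            HH.a (HH.S (HH.mul (a1 i) (b1 j))) := by
          rw [map_sum, map_sum]
          refine Finset.sum_congr rfl fun i _ => ?_
          rw [map_sum, map_sum]
          refine Finset.sum_congr rfl fun j _ => ?_
          rw [map_smul, map_smul]
      _ = ∑ i, ∑ j, HH.mul (HH.S (HH.mul (a1 i) (b1 j)))
            ((HH.counit (a2 i) * HH.counit (b2 j)) • HH.one) := by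
          refine Finset.sum_congr rfl fun i _ => Finset.sum_congr rfl fun j _ => ?_
          rw [map_smul, HH.mul_one']
  have e2 : HH.S (HH.mul x y) = ∑ i, ∑ j, ∑ u, ∑ v, HH.mul (HH.S (HH.mul (a1 i) (b1 j)))
      (HH.mul (HH.mul (a21 i u) (b21 j v)) (HH.mul (HH.S (b22 j v)) (HH.S (a22 i u)))) := by
    rw [e1]
    refine Finset.sum_congr rfl fun i _ => Finset.sum_congr rfl fun j _ => ?_
    rw [← PG HH (a2 i) (b2 j) (a21 i) (a22 i) (b21 j) (b22 j) (ha2 i) (hb2 j)]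
    simp only [map_sum]
  have e3 : HH.S (HH.mul x y) = ∑ i, ∑ u, ∑ j, ∑ v, HH.mul (HH.S (HH.mul (a1 i) (b1 j)))
      (HH.mul (HH.mul (a21 i u) (b21 j v)) (HH.mul (HH.S (b22 j v)) (HH.S (a22 i u)))) := by
    rw [e2]
    exact Finset.sum_congr rfl fun i _ => Finset.sum_comm
  have CAb := coassoc_sum HH y b1 b2 b11 b12 b21 b22 hb hb1 hb2
  have e4 : HH.S (HH.mul x y) = ∑ i, ∑ u, ∑ j, ∑ v,
      HH.mul (HH.S (HH.mul (a1 i) (HH.a (b11 j v))))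
        (HH.mul (HH.mul (a21 i u) (b12 j v))
          (HH.mul (HH.S (HH.a.symm (b2 j))) (HH.S (a22 i u)))) := by
    rw [e3]
    refine Finset.sum_congr rfl fun i _ => Finset.sum_congr rfl fun u _ => ?_
    exact tri_congr₂₂ (mk₃ (fun y1 y2 y3 => HH.mul (HH.S (HH.mul (a1 i) y1))
        (HH.mul (HH.mul (a21 i u) y2) (HH.mul (HH.S y3) (HH.S (a22 i u)))))
        (by intros; simp [map_add, LinearMap.add_apply])
        (by intros; simp [map_smul, LinearMap.smul_apply])
        (by intros; simp [map_add, LinearMap.add_apply])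
        (by intros; simp [map_smul, LinearMap.smul_apply])
        (by intros; simp [map_add, LinearMap.add_apply])
        (by intros; simp [map_smul, LinearMap.smul_apply]))
      (fun j _ => b1 j) b21 b22 (fun j v => HH.a (b11 j v)) b12 (fun j _ => HH.a.symm (b2 j)) CAb
  have e5 : HH.S (HH.mul x y) = ∑ j, ∑ v, ∑ i, ∑ u,
      HH.mul (HH.S (HH.mul (a1 i) (HH.a (b11 j v))))
        (HH.mul (HH.mul (a21 i u) (b12 j v))
          (HH.mul (HH.S (HH.a.symm (b2 j))) (HH.S (a22 i u)))) := by
    rw [e4]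
    exact swap₂₂ _
  have CAa := coassoc_sum HH x a1 a2 a11 a12 a21 a22 ha ha1 ha2
  have e6 : HH.S (HH.mul x y) = ∑ j, ∑ v, ∑ i, ∑ u,
      HH.mul (HH.S (HH.mul (HH.a (a11 i u)) (HH.a (b11 j v))))
        (HH.mul (HH.mul (a12 i u) (b12 j v))
          (HH.mul (HH.S (HH.a.symm (b2 j))) (HH.S (HH.a.symm (a2 i))))) := by
    rw [e5]
    refine Finset.sum_congr rfl fun j _ => Finset.sum_congr rfl fun v _ => ?_
    exact tri_congr₂₂ (mk₃ (fun z1 z2 z3 => HH.mul (HH.S (HH.mul z1 (HH.a (b11 j v))))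
        (HH.mul (HH.mul z2 (b12 j v)) (HH.mul (HH.S (HH.a.symm (b2 j))) (HH.S z3))))
        (by intros; simp [map_add, LinearMap.add_apply])
        (by intros; simp [map_smul, LinearMap.smul_apply])
        (by intros; simp [map_add, LinearMap.add_apply])
        (by intros; simp [map_smul, LinearMap.smul_apply])
        (by intros; simp [map_add, LinearMap.add_apply])
        (by intros; simp [map_smul, LinearMap.smul_apply]))
      (fun i _ => a1 i) a21 a22 (fun i u => HH.a (a11 i u)) a12 (fun i _ => HH.a.symm (a2 i)) CAa
  have point : ∀ p q r s w1 w2 : H, HH.mul (HH.S (HH.mul (HH.a p) (HH.a q)))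
      (HH.mul (HH.mul r s) (HH.mul (HH.S (HH.a.symm w1)) (HH.S (HH.a.symm w2))))
      = HH.mul (HH.mul (HH.S (HH.mul p q)) (HH.mul r s)) (HH.mul (HH.S w1) (HH.S w2)) := by
    intro p q r s w1 w2
    rw [← HH.a_mul, HH.S_a, S_a_symm HH, S_a_symm HH, ← a_symm_mul HH, HH.hom_assoc]
    simp
  have e7 : HH.S (HH.mul x y) = ∑ j, ∑ v, ∑ i, ∑ u,
      HH.mul (HH.mul (HH.S (HH.mul (a11 i u) (b11 j v))) (HH.mul (a12 i u) (b12 j v)))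
        (HH.mul (HH.S (b2 j)) (HH.S (a2 i))) := by
    rw [e6]
    exact Finset.sum_congr rfl fun j _ => Finset.sum_congr rfl fun v _ =>
      Finset.sum_congr rfl fun i _ => Finset.sum_congr rfl fun u _ => point _ _ _ _ _ _
  have e8 : HH.S (HH.mul x y) = ∑ i, ∑ j, ∑ u, ∑ v,
      HH.mul (HH.mul (HH.S (HH.mul (a11 i u) (b11 j v))) (HH.mul (a12 i u) (b12 j v)))
        (HH.mul (HH.S (b2 j)) (HH.S (a2 i))) := by
    rw [e7]
    rw [swap₂₂ (fun j v i u => HH.mul (HH.mul (HH.S (HH.mul (a11 i u) (b11 j v)))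
      (HH.mul (a12 i u) (b12 j v))) (HH.mul (HH.S (b2 j)) (HH.S (a2 i))))]
    exact Finset.sum_congr rfl fun i _ => Finset.sum_comm
  have e9 : HH.S (HH.mul x y) = ∑ i, ∑ j,
      HH.mul ((HH.counit (a1 i) * HH.counit (b1 j)) • HH.one)
        (HH.mul (HH.S (b2 j)) (HH.S (a2 i))) := by
    rw [e8]
    refine Finset.sum_congr rfl fun i _ => Finset.sum_congr rfl fun j _ => ?_
    rw [← FP HH (a1 i) (b1 j) (a11 i) (a12 i) (b11 j) (b12 j) (ha1 i) (hb1 j)]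
    simp only [map_sum, LinearMap.sum_apply]
  have e10 : HH.S (HH.mul x y) = ∑ i, ∑ j, (HH.counit (a1 i) * HH.counit (b1 j)) •
      HH.a (HH.mul (HH.S (b2 j)) (HH.S (a2 i))) := by
    rw [e9]
    refine Finset.sum_congr rfl fun i _ => Finset.sum_congr rfl fun j _ => ?_
    rw [map_smul, LinearMap.smul_apply, HH.one_mul']
  rw [e10]
  have e11 : ∀ i, ∑ j, (HH.counit (a1 i) * HH.counit (b1 j)) •
      HH.a (HH.mul (HH.S (b2 j)) (HH.S (a2 i)))
      = HH.counit (a1 i) • HH.a (HH.mul (HH.S (HH.a.symm y)) (HH.S (a2 i))) := by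
    intro i
    rw [← counit_sum_left HH y b1 b2 hb]
    calc ∑ j, (HH.counit (a1 i) * HH.counit (b1 j)) •
          HH.a (HH.mul (HH.S (b2 j)) (HH.S (a2 i)))
        = HH.counit (a1 i) • ∑ j, HH.counit (b1 j) •
            HH.a (HH.mul (HH.S (b2 j)) (HH.S (a2 i))) := by
          rw [Finset.smul_sum]
          exact Finset.sum_congr rfl fun j _ => mul_smul _ _ _
      _ = HH.counit (a1 i) • HH.a (HH.mul (HH.S (∑ j, HH.counit (b1 j) • b2 j))
            (HH.S (a2 i))) := by
          simp only [map_sum, map_smul, LinearMap.sum_apply, LinearMap.smul_apply]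
  rw [Finset.sum_congr rfl (fun i _ => e11 i)]
  have e12 : ∑ i, HH.counit (a1 i) • HH.a (HH.mul (HH.S (HH.a.symm y)) (HH.S (a2 i)))
      = HH.a (HH.mul (HH.S (HH.a.symm y)) (HH.S (HH.a.symm x))) := by
    rw [← counit_sum_left HH x a1 a2 ha]
    simp only [map_sum, map_smul]
  rw [e12, S_a_symm HH, S_a_symm HH, ← a_symm_mul HH]
  simp

theorem S_symm_sum {ι : Type*} [Fintype ι] (x : H) (x1 x2 : ι → H)
    (hx : HH.comul x = ∑ i, x1 i ⊗ₜ[k] x2 i) :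
    ∑ i, HH.mul (HH.S.symm (x2 i)) (x1 i) = HH.counit x • HH.one := by
  apply HH.S.injective
  rw [map_sum]
  have hterm : ∀ i, HH.S (HH.mul (HH.S.symm (x2 i)) (x1 i))
      = HH.mul (HH.S (x1 i)) (x2 i) := by
    intro i
    rw [S_antimul HH]
    simp
  rw [Finset.sum_congr rfl (fun i _ => hterm i), antipode_sum_left HH x x1 x2 hx,
    map_smul, S_one HH]

end Antimul

/-- The braiding c_{M,N}(m⊗n) = ν(n₍₀₎) ⊗ B⁻¹(n₍₁₎)·μ⁻¹(m) is H-linear for the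
tensor actions h·(m⊗n) = C(h₁)·m ⊗ C⁻¹BC(h₂)·n on M⊗N and
h·(n⊗m) = C⁻¹BC(h₁)·n ⊗ B⁻¹DC⁻¹BC(h₂)·m on ᴹN⊗M. -/
theorem stmt_11 {k : Type*} [Field k] {H : Type*} [AddCommGroup H] [Module k H]
    {M : Type*} [AddCommGroup M] [Module k M] {N : Type*} [AddCommGroup N] [Module k N]
    (HH : HomHopf k H) (A B C D : H ≃ₗ[k] H)
    (hA : IsHomHopfAuto HH A) (hB : IsHomHopfAuto HH B)
    (hC : IsHomHopfAuto HH C) (hD : IsHomHopfAuto HH D)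
    (YM : YDModule HH A B M) (YN : YDModule HH C D N)
    (c : (M ⊗[k] N) →ₗ[k] (N ⊗[k] M))
    (hc : ∀ (m : M) (x : N) (q : ℕ) (n0 : Fin q → N) (n1 : Fin q → H),
      YN.coact x = ∑ l, n0 l ⊗ₜ[k] n1 l →
      c (m ⊗ₜ[k] x) = ∑ l, YN.mu (n0 l) ⊗ₜ[k] YM.act (B.symm (n1 l)) (YM.mu.symm m))
    (actMN : H →ₗ[k] (M ⊗[k] N) →ₗ[k] (M ⊗[k] N))
    (hactMN : ∀ (h : H) (m : M) (x : N) (n : ℕ) (h1 h2 : Fin n → H),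
      HH.comul h = ∑ i, h1 i ⊗ₜ[k] h2 i →
      actMN h (m ⊗ₜ[k] x)
        = ∑ i, YM.act (C (h1 i)) m ⊗ₜ[k] YN.act (C.symm (B (C (h2 i)))) x)
    (actNM : H →ₗ[k] (N ⊗[k] M) →ₗ[k] (N ⊗[k] M))
    (hactNM : ∀ (h : H) (x : N) (m : M) (n : ℕ) (h1 h2 : Fin n → H),
      HH.comul h = ∑ i, h1 i ⊗ₜ[k] h2 i →
      actNM h (x ⊗ₜ[k] m)
        = ∑ i, YN.act (C.symm (B (C (h1 i)))) x ⊗ₜ[k]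
            YM.act (B.symm (D (C.symm (B (C (h2 i)))))) m) :
    ∀ (h : H) (z : M ⊗[k] N), c (actMN h z) = actNM h (c z) := by
  intro h z
  have main : ∀ (m : M) (x : N),
      c (actMN h (m ⊗ₜ[k] x)) = actNM h (c (m ⊗ₜ[k] x)) := by
    intro m x
    classical
    let gA : H ≃ₗ[k] H := (C ≪≫ₗ B) ≪≫ₗ C.symm
    have hgauto : IsHomHopfAuto HH gA :=
      auto_trans HH (auto_trans HH hC hB) (auto_symm HH hC)
    have hgdef : ∀ y : H, C.symm (B (C y)) = gA y := fun _ => rfl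
    have hBs := auto_symm HH hB
    have hgas : ∀ y, gA (HH.a.symm y) = HH.a.symm (gA y) := auto_a_symm HH hgauto
    have hDas : ∀ y, D (HH.a.symm y) = HH.a.symm (D y) := auto_a_symm HH hD
    have hBsas : ∀ y, B.symm (HH.a.symm y) = HH.a.symm (B.symm y) := auto_a_symm HH hBs
    have hgSs : ∀ y, HH.S.symm (gA y) = gA (HH.S.symm y) := auto_S_symm HH hgauto
    -- presentations
    obtain ⟨n, h1, h2, hh⟩ := exists_rep (HH.comul h)
    obtain ⟨p, h11, h12, hh1⟩ := exists_rep_fam (fun i => HH.comul (h1 i))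
    obtain ⟨r, h21, h22, hh2⟩ := exists_rep_fam (fun i => HH.comul (h2 i))
    obtain ⟨w, h221, h222, hh22⟩ :=
      exists_rep_fam (fun ij : Fin n × Fin r => HH.comul (h22 ij.1 ij.2))
    obtain ⟨q, x0, x1, hx⟩ := exists_rep (YN.coact x)
    -- Yetter-Drinfeld module helpers
    have act_act : ∀ (u v : H) (mm : M),
        YM.act u (YM.act v (YM.mu.symm mm)) = YM.act (HH.mul (HH.a.symm u) v) mm := by
      intro u v mm
      have hh' := YM.hom_act (HH.a.symm u) v (YM.mu.symm mm)
      rw [LinearEquiv.apply_symm_apply, LinearEquiv.apply_symm_apply] at hh'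
      exact hh'
    have mu_symm_act : ∀ (u : H) (mm : M),
        YM.mu.symm (YM.act u mm) = YM.act (HH.a.symm u) (YM.mu.symm mm) := by
      intro u mm
      rw [LinearEquiv.symm_apply_eq, YM.mu_act, LinearEquiv.apply_symm_apply,
        LinearEquiv.apply_symm_apply]
    -- right-hand side
    have hRHS : actNM h (c (m ⊗ₜ[k] x)) = ∑ i, ∑ s,
        YN.act (gA (h1 i)) (YN.mu (x0 s)) ⊗ₜ[k]
          YM.act (HH.mul (HH.a.symm (B.symm (D (gA (h2 i))))) (B.symm (x1 s))) m := by
      rw [hc m x q x0 x1 hx, map_sum]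
      have hterm : ∀ s, actNM h (YN.mu (x0 s) ⊗ₜ[k] YM.act (B.symm (x1 s)) (YM.mu.symm m))
          = ∑ i, YN.act (gA (h1 i)) (YN.mu (x0 s)) ⊗ₜ[k]
              YM.act (HH.mul (HH.a.symm (B.symm (D (gA (h2 i))))) (B.symm (x1 s))) m := by
        intro s
        rw [hactNM h _ _ n h1 h2 hh]
        simp only [hgdef]
        exact Finset.sum_congr rfl fun i _ => by rw [act_act]
      rw [Finset.sum_congr rfl (fun s _ => hterm s), Finset.sum_comm]
    -- coaction of the twisted action (compat)
    have hcompat : ∀ i, YN.coact (YN.act (gA (h2 i)) x)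
        = ∑ j, ∑ l, ∑ s, YN.act (HH.a (gA (h221 (i, j) l))) (x0 s) ⊗ₜ[k]
            HH.mul (HH.mul (D (gA (h222 (i, j) l))) (HH.a.symm (x1 s)))
              (C (HH.S.symm (gA (h21 i j)))) := by
      intro i
      exact YN.compat (gA (h2 i)) x r (fun j => gA (h21 i j)) (fun j => gA (h22 i j))
        (auto_comul_sum HH hgauto (h2 i) (h21 i) (h22 i) (hh2 i))
        w (fun j l => gA (h221 (i, j) l)) (fun j l => gA (h222 (i, j) l))
        (fun j => auto_comul_sum HH hgauto (h22 i j) (h221 (i, j)) (h222 (i, j)) (hh22 (i, j)))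
        q x0 x1 hx
    -- braiding of the twisted pieces, via flattening the triple sum
    have hci : ∀ i, c (YM.act (C (h1 i)) m ⊗ₜ[k] YN.act (gA (h2 i)) x)
        = ∑ j, ∑ l, ∑ s, YN.mu (YN.act (HH.a (gA (h221 (i, j) l))) (x0 s)) ⊗ₜ[k]
            YM.act (B.symm (HH.mul (HH.mul (D (gA (h222 (i, j) l))) (HH.a.symm (x1 s)))
              (C (HH.S.symm (gA (h21 i j))))))
              (YM.mu.symm (YM.act (C (h1 i)) m)) := by
      intro i
      let E : Fin (r * (w * q)) ≃ Fin r × (Fin w × Fin q) :=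
        finProdFinEquiv.symm.trans (Equiv.prodCongr (Equiv.refl (Fin r)) finProdFinEquiv.symm)
      have hflat : YN.coact (YN.act (gA (h2 i)) x) = ∑ t : Fin (r * (w * q)),
          YN.act (HH.a (gA (h221 (i, (E t).1) (E t).2.1))) (x0 (E t).2.2) ⊗ₜ[k]
            HH.mul (HH.mul (D (gA (h222 (i, (E t).1) (E t).2.1))) (HH.a.symm (x1 (E t).2.2)))
              (C (HH.S.symm (gA (h21 i (E t).1)))) := by
        rw [hcompat i]
        have hb := Fintype.sum_bijective E E.bijective
          (fun t => YN.act (HH.a (gA (h221 (i, (E t).1) (E t).2.1))) (x0 (E t).2.2) ⊗ₜ[k]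
            HH.mul (HH.mul (D (gA (h222 (i, (E t).1) (E t).2.1))) (HH.a.symm (x1 (E t).2.2)))
              (C (HH.S.symm (gA (h21 i (E t).1)))))
          (fun pp => YN.act (HH.a (gA (h221 (i, pp.1) pp.2.1))) (x0 pp.2.2) ⊗ₜ[k]
            HH.mul (HH.mul (D (gA (h222 (i, pp.1) pp.2.1))) (HH.a.symm (x1 pp.2.2)))
              (C (HH.S.symm (gA (h21 i pp.1)))))
          (fun t => rfl)
        rw [hb]
        simp [Fintype.sum_prod_type]
      rw [hc (YM.act (C (h1 i)) m) (YN.act (gA (h2 i)) x) (r * (w * q))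
        (fun t => YN.act (HH.a (gA (h221 (i, (E t).1) (E t).2.1))) (x0 (E t).2.2))
        (fun t => HH.mul (HH.mul (D (gA (h222 (i, (E t).1) (E t).2.1)))
          (HH.a.symm (x1 (E t).2.2))) (C (HH.S.symm (gA (h21 i (E t).1))))) hflat]
      have hb2 := Fintype.sum_bijective E E.bijective
        (fun t => YN.mu (YN.act (HH.a (gA (h221 (i, (E t).1) (E t).2.1))) (x0 (E t).2.2)) ⊗ₜ[k]
          YM.act (B.symm (HH.mul (HH.mul (D (gA (h222 (i, (E t).1) (E t).2.1)))
            (HH.a.symm (x1 (E t).2.2))) (C (HH.S.symm (gA (h21 i (E t).1))))))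
            (YM.mu.symm (YM.act (C (h1 i)) m)))
        (fun pp => YN.mu (YN.act (HH.a (gA (h221 (i, pp.1) pp.2.1))) (x0 pp.2.2)) ⊗ₜ[k]
          YM.act (B.symm (HH.mul (HH.mul (D (gA (h222 (i, pp.1) pp.2.1)))
            (HH.a.symm (x1 pp.2.2))) (C (HH.S.symm (gA (h21 i pp.1))))))
            (YM.mu.symm (YM.act (C (h1 i)) m)))
        (fun t => rfl)
      rw [hb2]
      simp [Fintype.sum_prod_type]
    -- step 1: expand the left-hand side completely
    have hL1 : c (actMN h (m ⊗ₜ[k] x)) = ∑ i, ∑ j, ∑ l, ∑ s,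
        YN.act (HH.a (HH.a (gA (h221 (i, j) l)))) (YN.mu (x0 s)) ⊗ₜ[k]
          YM.act (HH.a.symm (HH.mul (B.symm (HH.mul (HH.mul (D (gA (h222 (i, j) l)))
            (HH.a.symm (x1 s))) (C (HH.S.symm (gA (h21 i j)))))) (C (h1 i)))) m := by
      rw [hactMN h m x n h1 h2 hh, map_sum]
      simp only [hgdef]
      refine Finset.sum_congr rfl fun i _ => ?_
      rw [hci i]
      refine Finset.sum_congr rfl fun j _ => Finset.sum_congr rfl fun l _ =>
        Finset.sum_congr rfl fun s _ => ?_
      rw [YN.mu_act, mu_symm_act, act_act, ← a_symm_mul HH]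
    -- step 2: coassociativity rearrangement of the four-fold tensor
    have hh22' : ∀ (i : Fin n) (j : Fin r), HH.comul (h22 i j)
        = ∑ l, h221 (i, j) l ⊗ₜ[k] h222 (i, j) l := fun i j => hh22 (i, j)
    have hsym : ∀ i : Fin n, HH.comul (HH.a.symm (h2 i))
        = ∑ l, HH.a.symm (h21 i l) ⊗ₜ[k] HH.a.symm (h22 i l) :=
      fun i => comul_a_symm_sum HH (h2 i) (h21 i) (h22 i) (hh2 i)
    have Yeq : ∑ i, ∑ j, ∑ l, h1 i ⊗ₜ[k] (h21 i j ⊗ₜ[k] (h221 (i, j) l ⊗ₜ[k] h222 (i, j) l))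
        = ∑ i, ∑ (j : Fin p), ∑ (l : Fin r), HH.a (h11 i j) ⊗ₜ[k]
            (h12 i j ⊗ₜ[k] (HH.a.symm (h21 i l) ⊗ₜ[k] HH.a.symm (h22 i l))) := by
      have hmap := congrArg (TensorProduct.map (LinearMap.id : H →ₗ[k] H)
        (TensorProduct.map (LinearMap.id : H →ₗ[k] H) HH.comul))
        (coassoc_sum HH h h1 h2 h11 h12 h21 h22 hh hh1 hh2)
      simp only [map_sum, TensorProduct.map_tmul, LinearMap.id_coe, id_eq, hh22', hsym,
        TensorProduct.tmul_sum] at hmap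
      exact hmap
    have hquad := quad_congr₃₃ (mk₄ (fun s1 s2 s3 s4 => ∑ s,
        YN.act (HH.a (HH.a (gA s3))) (YN.mu (x0 s)) ⊗ₜ[k]
          YM.act (HH.a.symm (HH.mul (B.symm (HH.mul (HH.mul (D (gA s4)) (HH.a.symm (x1 s)))
            (C (HH.S.symm (gA s2))))) (C s1))) m)
        (by intros; simp [map_add, LinearMap.add_apply, TensorProduct.add_tmul,
          TensorProduct.tmul_add, Finset.sum_add_distrib])
        (by intros; simp [map_smul, LinearMap.smul_apply, TensorProduct.smul_tmul',
          TensorProduct.tmul_smul, Finset.smul_sum])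
        (by intros; simp [map_add, LinearMap.add_apply, TensorProduct.add_tmul,
          TensorProduct.tmul_add, Finset.sum_add_distrib])
        (by intros; simp [map_smul, LinearMap.smul_apply, TensorProduct.smul_tmul',
          TensorProduct.tmul_smul, Finset.smul_sum])
        (by intros; simp [map_add, LinearMap.add_apply, TensorProduct.add_tmul,
          TensorProduct.tmul_add, Finset.sum_add_distrib])
        (by intros; simp [map_smul, LinearMap.smul_apply, TensorProduct.smul_tmul',
          TensorProduct.tmul_smul, Finset.smul_sum])
        (by intros; simp [map_add, LinearMap.add_apply, TensorProduct.add_tmul,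
          TensorProduct.tmul_add, Finset.sum_add_distrib])
        (by intros; simp [map_smul, LinearMap.smul_apply, TensorProduct.smul_tmul',
          TensorProduct.tmul_smul, Finset.smul_sum]))
        (fun i _ _ => h1 i) (fun i j _ => h21 i j) (fun i j l => h221 (i, j) l)
        (fun i j l => h222 (i, j) l)
        (fun i j _ => HH.a (h11 i j)) (fun i j _ => h12 i j)
        (fun i _ l => HH.a.symm (h21 i l)) (fun i _ l => HH.a.symm (h22 i l)) Yeq
    simp only [mk₄_apply] at hquad
    have hL2 : c (actMN h (m ⊗ₜ[k] x)) = ∑ i, ∑ (j : Fin p), ∑ (l : Fin r), ∑ s,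
        YN.act (HH.a (HH.a (gA (HH.a.symm (h21 i l))))) (YN.mu (x0 s)) ⊗ₜ[k]
          YM.act (HH.a.symm (HH.mul (B.symm (HH.mul (HH.mul (D (gA (HH.a.symm (h22 i l))))
            (HH.a.symm (x1 s))) (C (HH.S.symm (gA (h12 i j)))))) (C (HH.a (h11 i j))))) m :=
      hL1.trans hquad
    -- step 3: pointwise simplification of each term
    have hBCg : ∀ y : H, B.symm (C (HH.S.symm (gA y))) = C (HH.S.symm y) := by
      intro y
      rw [hgSs y, ← hgdef, LinearEquiv.apply_symm_apply, LinearEquiv.symm_apply_apply]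
    have hL3 : c (actMN h (m ⊗ₜ[k] x)) = ∑ i, ∑ (j : Fin p), ∑ (l : Fin r), ∑ s,
        YN.act (HH.a (gA (h21 i l))) (YN.mu (x0 s)) ⊗ₜ[k]
          YM.act (HH.a.symm (HH.mul
            (HH.a (B.symm (HH.mul (HH.a.symm (D (gA (h22 i l)))) (HH.a.symm (x1 s)))))
            (HH.mul (C (HH.S.symm (h12 i j))) (C (h11 i j))))) m := by
      rw [hL2]
      refine Finset.sum_congr rfl fun i _ => Finset.sum_congr rfl fun j _ =>
        Finset.sum_congr rfl fun l _ => Finset.sum_congr rfl fun s _ => ?_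
      rw [hgas (h21 i l), LinearEquiv.apply_symm_apply]
      rw [hgas (h22 i l), hDas, hBs.map_mul, hBCg, hC.map_a, ← HH.hom_assoc]
    -- step 4: collapse the j-sum using the S⁻¹ antipode identity
    have hz : ∀ i, ∑ (j : Fin p), HH.mul (C (HH.S.symm (h12 i j))) (C (h11 i j))
        = HH.counit (h1 i) • HH.one := by
      intro i
      have hterm : ∀ j, HH.mul (C (HH.S.symm (h12 i j))) (C (h11 i j))
          = C (HH.mul (HH.S.symm (h12 i j)) (h11 i j)) := fun j => (hC.map_mul _ _).symm
      rw [Finset.sum_congr rfl fun j _ => hterm j, ← map_sum,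
        S_symm_sum HH (h1 i) (h11 i) (h12 i) (hh1 i), map_smul, hC.map_one]
    have hcol : ∀ (AA : N) (X : H) (i : Fin n),
        ∑ (j : Fin p), AA ⊗ₜ[k] YM.act (HH.a.symm (HH.mul (HH.a X)
          (HH.mul (C (HH.S.symm (h12 i j))) (C (h11 i j))))) m
        = HH.counit (h1 i) • (AA ⊗ₜ[k] YM.act (HH.a X) m) := by
      intro AA X i
      have hF : ∀ z : H, YM.act (HH.a.symm (HH.mul (HH.a X) z)) m
          = ((YM.act.flip m).comp (HH.a.symm.toLinearMap.comp (HH.mul (HH.a X)))) z :=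
        fun z => rfl
      calc ∑ (j : Fin p), AA ⊗ₜ[k] YM.act (HH.a.symm (HH.mul (HH.a X)
            (HH.mul (C (HH.S.symm (h12 i j))) (C (h11 i j))))) m
          = AA ⊗ₜ[k] ((YM.act.flip m).comp (HH.a.symm.toLinearMap.comp (HH.mul (HH.a X))))
              (∑ (j : Fin p), HH.mul (C (HH.S.symm (h12 i j))) (C (h11 i j))) := by
            rw [map_sum, TensorProduct.tmul_sum]
            exact Finset.sum_congr rfl fun j _ => by rw [hF]
        _ = AA ⊗ₜ[k] ((YM.act.flip m).comp (HH.a.symm.toLinearMap.comp (HH.mul (HH.a X))))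
              (HH.counit (h1 i) • HH.one) := by rw [hz i]
        _ = HH.counit (h1 i) • (AA ⊗ₜ[k] YM.act (HH.a X) m) := by
            rw [map_smul, TensorProduct.tmul_smul]
            simp only [LinearMap.comp_apply, LinearMap.flip_apply, LinearEquiv.coe_coe]
            rw [HH.mul_one', LinearEquiv.symm_apply_apply]
    have hXa : ∀ (u v : H),
        HH.a (B.symm (HH.mul (HH.a.symm u) (HH.a.symm v))) = HH.mul (B.symm u) (B.symm v) := by
      intro u v
      rw [hBs.map_mul, HH.a_mul, hBsas, hBsas, LinearEquiv.apply_symm_apply,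
        LinearEquiv.apply_symm_apply]
    have hL4 : c (actMN h (m ⊗ₜ[k] x)) = ∑ i, ∑ (l : Fin r), ∑ s, HH.counit (h1 i) •
        (YN.act (HH.a (gA (h21 i l))) (YN.mu (x0 s)) ⊗ₜ[k]
          YM.act (HH.mul (B.symm (D (gA (h22 i l)))) (B.symm (x1 s))) m) := by
      rw [hL3]
      refine Finset.sum_congr rfl fun i _ => ?_
      rw [rotate₃ (fun (j : Fin p) (l : Fin r) (s : Fin q) =>
        YN.act (HH.a (gA (h21 i l))) (YN.mu (x0 s)) ⊗ₜ[k]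
          YM.act (HH.a.symm (HH.mul
            (HH.a (B.symm (HH.mul (HH.a.symm (D (gA (h22 i l)))) (HH.a.symm (x1 s)))))
            (HH.mul (C (HH.S.symm (h12 i j))) (C (h11 i j))))) m)]
      refine Finset.sum_congr rfl fun l _ => Finset.sum_congr rfl fun s _ => ?_
      rw [hcol (YN.act (HH.a (gA (h21 i l))) (YN.mu (x0 s)))
        (B.symm (HH.mul (HH.a.symm (D (gA (h22 i l)))) (HH.a.symm (x1 s)))) i]
      rw [hXa]
    -- step 5: collapse the counit weights back into the comultiplication
    have Eeq : ∑ i, ∑ (l : Fin r), (HH.counit (h1 i) • h21 i l) ⊗ₜ[k] h22 i l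
        = ∑ i, HH.a.symm (h1 i) ⊗ₜ[k] HH.a.symm (h2 i) := by
      calc ∑ i, ∑ (l : Fin r), (HH.counit (h1 i) • h21 i l) ⊗ₜ[k] h22 i l
          = ∑ i, HH.counit (h1 i) • HH.comul (h2 i) := by
            refine Finset.sum_congr rfl fun i _ => ?_
            rw [hh2 i, Finset.smul_sum]
            exact Finset.sum_congr rfl fun l _ => (TensorProduct.smul_tmul' _ _ _).symm
        _ = HH.comul (∑ i, HH.counit (h1 i) • h2 i) := by
            rw [map_sum]
            exact Finset.sum_congr rfl fun i _ => (map_smul _ _ _).symm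
        _ = HH.comul (HH.a.symm h) := by rw [counit_sum_left HH h h1 h2 hh]
        _ = ∑ i, HH.a.symm (h1 i) ⊗ₜ[k] HH.a.symm (h2 i) :=
            comul_a_symm_sum HH h h1 h2 hh
    have hbc := bi_congr₂₁ (LinearMap.mk₂ k (fun y z => ∑ s,
        YN.act (HH.a (gA y)) (YN.mu (x0 s)) ⊗ₜ[k]
          YM.act (HH.mul (B.symm (D (gA z))) (B.symm (x1 s))) m)
        (by intros; simp [map_add, LinearMap.add_apply, TensorProduct.add_tmul,
          Finset.sum_add_distrib])
        (by intros; simp [map_smul, LinearMap.smul_apply, TensorProduct.smul_tmul',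
          Finset.smul_sum])
        (by intros; simp [map_add, LinearMap.add_apply, TensorProduct.tmul_add,
          Finset.sum_add_distrib])
        (by intros; simp [map_smul, LinearMap.smul_apply, TensorProduct.tmul_smul,
          Finset.smul_sum]))
      (fun i l => HH.counit (h1 i) • h21 i l) (fun i l => h22 i l)
      (fun i => HH.a.symm (h1 i)) (fun i => HH.a.symm (h2 i)) Eeq
    simp only [LinearMap.mk₂_apply] at hbc
    calc c (actMN h (m ⊗ₜ[k] x))
        = ∑ i, ∑ (l : Fin r), ∑ s, HH.counit (h1 i) •
            (YN.act (HH.a (gA (h21 i l))) (YN.mu (x0 s)) ⊗ₜ[k]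
              YM.act (HH.mul (B.symm (D (gA (h22 i l)))) (B.symm (x1 s))) m) := hL4
      _ = ∑ i, ∑ (l : Fin r), ∑ s,
            YN.act (HH.a (gA (HH.counit (h1 i) • h21 i l))) (YN.mu (x0 s)) ⊗ₜ[k]
              YM.act (HH.mul (B.symm (D (gA (h22 i l)))) (B.symm (x1 s))) m := by
          refine Finset.sum_congr rfl fun i _ => Finset.sum_congr rfl fun l _ =>
            Finset.sum_congr rfl fun s _ => ?_
          rw [map_smul, map_smul, map_smul, LinearMap.smul_apply,
            TensorProduct.smul_tmul']
      _ = ∑ i, ∑ s, YN.act (HH.a (gA (HH.a.symm (h1 i)))) (YN.mu (x0 s)) ⊗ₜ[k]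
            YM.act (HH.mul (B.symm (D (gA (HH.a.symm (h2 i))))) (B.symm (x1 s))) m := hbc
      _ = ∑ i, ∑ s, YN.act (gA (h1 i)) (YN.mu (x0 s)) ⊗ₜ[k]
            YM.act (HH.mul (HH.a.symm (B.symm (D (gA (h2 i))))) (B.symm (x1 s))) m := by
          refine Finset.sum_congr rfl fun i _ => Finset.sum_congr rfl fun s _ => ?_
          rw [hgas (h1 i), LinearEquiv.apply_symm_apply, hgas (h2 i), hDas, hBsas]
      _ = actNM h (c (m ⊗ₜ[k] x)) := hRHS.symm
  induction z with
  | zero => simp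
  | tmul mm xx => exact main mm xx
  | add u v hu hv => simp [map_add, hu, hv]
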